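/- arXiv:2511.19812 — 2 statements merged into one kernel-verified Lean document; each statement's English description precedes it below -/
import Mathlib

section
/- For vectors a1, a2 in F4^ℓ, the sum-rank weight of the codeword a1*x + a2*x^2 (i.e., the sum over coordinates i of the F2-rank of the linear map x ↦ a1_i*x + a2_i*x^2 on F4) equals 2*wt_H(a1) + 2*wt_H(a2) − 3*|supp(a1) ∩ supp(a2)|. -/
open scoped Classical

noncomputable section

/-- The field with 4 elements. -/
abbrev F4 := GaloisField 2 2

noncomputable instance : Fintype F4 := Fintype.ofFinite _

/-- The `F2`-linear map `x ↦ x1*x + x2*x^2` on `F4`. -/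
noncomputable def Lmap (x1 x2 : F4) : F4 →ₗ[ZMod 2] F4 where
  toFun x := x1 * x + x2 * x ^ 2
  map_add' x y := by
    have h : (x + y) ^ 2 = x ^ 2 + y ^ 2 := add_pow_char x y 2
    try simp only []
    rw [h]; ring
  map_smul' c x := by
    have hc : c ^ 2 = c := ZMod.pow_card c
    simp only [Algebra.smul_def, RingHom.id_apply, mul_pow, ← map_pow, hc]
    ring

/-- `F2`-rank of an `F2`-linear endomorphism of `F4`. -/
noncomputable def rk (f : F4 →ₗ[ZMod 2] F4) : ℕ :=
  Module.finrank (ZMod 2) (LinearMap.range f)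

/-- Sum-rank weight of `a1*x + a2*x^2`. -/
noncomputable def srWt {ℓ : ℕ} (a1 a2 : Fin ℓ → F4) : ℕ :=
  ∑ i, rk (Lmap (a1 i) (a2 i))

lemma card_F4 : Fintype.card F4 = 4 := by
  have h := GaloisField.card 2 2 (by norm_num)
  rwa [Nat.card_eq_fintype_card] at h

lemma finrank_F4 : Module.finrank (ZMod 2) F4 = 2 := by
  have h := Module.card_eq_pow_finrank (K := ZMod 2) (V := F4)
  rw [card_F4, ZMod.card] at h
  have : (4 : ℕ) = 2 ^ 2 := by norm_num
  rw [this] at h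
  exact (Nat.pow_right_injective (le_refl 2) h.symm)

lemma Lmap_apply (x1 x2 x : F4) : Lmap x1 x2 x = x1 * x + x2 * x ^ 2 := rfl

lemma rk_surj {x1 x2 : F4} (h : Function.Surjective (Lmap x1 x2)) :
    rk (Lmap x1 x2) = 2 := by
  unfold rk
  rw [LinearMap.range_eq_top.mpr h, finrank_top, finrank_F4]

lemma pow_four (x : F4) : x ^ 4 = x := by
  have := FiniteField.pow_card x
  rwa [card_F4] at this

lemma rk_left {x1 : F4} (h1 : x1 ≠ 0) : rk (Lmap x1 0) = 2 := by
  apply rk_surj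
  intro y
  refine ⟨x1⁻¹ * y, ?_⟩
  rw [Lmap_apply]
  field_simp
  ring

lemma rk_right {x2 : F4} (h2 : x2 ≠ 0) : rk (Lmap 0 x2) = 2 := by
  apply rk_surj
  intro y
  refine ⟨(x2⁻¹ * y) ^ 2, ?_⟩
  rw [Lmap_apply, ← pow_mul]
  have : (x2⁻¹ * y) ^ (2 * 2) = (x2⁻¹ * y) ^ 4 := by norm_num
  rw [this, pow_four]
  field_simp
  ring

lemma rk_zero : rk (Lmap 0 0) = 0 := by
  unfold rk
  have : Lmap 0 0 = 0 := by
    ext x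
    simp [Lmap_apply]
  rw [this, LinearMap.range_zero, finrank_bot]

lemma exists_ne01 : ∃ a : F4, a ≠ 0 ∧ a ≠ 1 := by
  by_contra h
  push_neg at h
  have hsub : (Finset.univ : Finset F4) ⊆ {0, 1} := by
    intro a _
    rcases eq_or_ne a 0 with h0 | h0
    · simp [h0]
    · simp [h a h0]
  have hc : Fintype.card F4 ≤ 2 := by
    calc Fintype.card F4 = (Finset.univ : Finset F4).card := rfl
    _ ≤ ({0, 1} : Finset F4).card := Finset.card_le_card hsub
    _ ≤ 2 := Finset.card_insert_le _ _ |>.trans (by simp)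
  rw [card_F4] at hc
  omega

lemma rk_both {x1 x2 : F4} (h1 : x1 ≠ 0) (h2 : x2 ≠ 0) :
    rk (Lmap x1 x2) = 1 := by
  have hrn := LinearMap.finrank_range_add_finrank_ker (Lmap x1 x2)
  rw [finrank_F4] at hrn
  -- kernel is nontrivial
  have hker_ne_bot : LinearMap.ker (Lmap x1 x2) ≠ ⊥ := by
    intro hbot
    have hmem : x1 * x2⁻¹ ∈ LinearMap.ker (Lmap x1 x2) := by
      rw [LinearMap.mem_ker, Lmap_apply]
      have h : x2 * (x1 * x2⁻¹) ^ 2 = x1 * (x1 * x2⁻¹) := by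
        field_simp
      rw [h, CharTwo.add_self_eq_zero]
    rw [hbot, Submodule.mem_bot] at hmem
    exact h1 (by simpa [mul_eq_zero, inv_eq_zero, h2] using hmem)
  -- kernel is not everything
  have hker_ne_top : LinearMap.ker (Lmap x1 x2) ≠ ⊤ := by
    intro htop
    obtain ⟨a, ha0, ha1⟩ := exists_ne01
    have hLa : Lmap x1 x2 a = 0 := by
      have : a ∈ LinearMap.ker (Lmap x1 x2) := htop ▸ Submodule.mem_top
      exact this
    have hL1 : Lmap x1 x2 1 = 0 := by
      have : (1 : F4) ∈ LinearMap.ker (Lmap x1 x2) := htop ▸ Submodule.mem_top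
      exact this
    rw [Lmap_apply] at hLa hL1
    simp only [mul_one, one_pow] at hL1
    -- x1 = -x2 = x2 (char 2)
    have hx12 : x1 = x2 := by
      have : x1 = -x2 := by linear_combination hL1
      rw [this, CharTwo.neg_eq]
    rw [hx12] at hLa
    have hsum : a ^ 2 = a := by
      have : a ^ 2 = -a := by
        have hx2a : x2 * a + x2 * a ^ 2 = 0 := hLa
        have := mul_left_cancel₀ h2 (show x2 * (a ^ 2) = x2 * (-a) by
          linear_combination hx2a)
        exact this
      rw [this, CharTwo.neg_eq]
    have : a * (a - 1) = 0 := by linear_combination hsum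
    rcases mul_eq_zero.mp this with h | h
    · exact ha0 h
    · exact ha1 (by linear_combination h)
  have hle : Module.finrank (ZMod 2) (LinearMap.ker (Lmap x1 x2)) ≤ 2 := by omega
  have hpos : 0 < Module.finrank (ZMod 2) (LinearMap.ker (Lmap x1 x2)) := by
    rw [Module.finrank_pos_iff]
    exact Submodule.nontrivial_iff_ne_bot.mpr hker_ne_bot
  have hne2 : Module.finrank (ZMod 2) (LinearMap.ker (Lmap x1 x2)) ≠ 2 := by
    intro h2'
    apply hker_ne_top
    apply Submodule.eq_top_of_finrank_eq
    rw [h2', finrank_F4]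
  unfold rk
  omega

theorem stmt3 {ℓ : ℕ} (a1 a2 : Fin ℓ → F4) :
    (srWt a1 a2 : ℤ) =
      2 * (hammingNorm a1 : ℤ) + 2 * (hammingNorm a2 : ℤ) -
        3 * ((Finset.univ.filter (fun i => a1 i ≠ 0 ∧ a2 i ≠ 0)).card : ℤ) := by
  have key : ∀ i : Fin ℓ, (rk (Lmap (a1 i) (a2 i)) : ℤ) =
      2 * (if a1 i ≠ 0 then 1 else 0) + 2 * (if a2 i ≠ 0 then 1 else 0)
        - 3 * (if a1 i ≠ 0 ∧ a2 i ≠ 0 then 1 else 0) := by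
    intro i
    by_cases h1 : a1 i = 0 <;> by_cases h2 : a2 i = 0
    · simp [h1, h2, rk_zero]
    · simp [h1, h2, rk_right h2]
    · simp [h1, h2, rk_left h1]
    · simp [h1, h2, rk_both h1 h2]
  have hcast : ∀ (p : Fin ℓ → Prop) (_ : DecidablePred p),
      ((Finset.univ.filter p).card : ℤ) = ∑ i, (if p i then (1:ℤ) else 0) := by
    intro p hp
    rw [Finset.card_filter]
    push_cast
    exact Finset.sum_congr rfl (fun i _ => by split <;> simp)
  have hsr : (srWt a1 a2 : ℤ) = ∑ i, (rk (Lmap (a1 i) (a2 i)) : ℤ) := by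
    unfold srWt; push_cast; rfl
  rw [hsr, Finset.sum_congr rfl (fun i _ => key i)]
  rw [show (hammingNorm a1 : ℤ) = ((Finset.univ.filter (fun i => a1 i ≠ 0)).card : ℤ) from rfl]
  rw [show (hammingNorm a2 : ℤ) = ((Finset.univ.filter (fun i => a2 i ≠ 0)).card : ℤ) from rfl]
  rw [hcast _ _, hcast _ _, hcast _ _]
  rw [Finset.sum_sub_distrib, Finset.sum_add_distrib, ← Finset.mul_sum, ← Finset.mul_sum,
    ← Finset.mul_sum]
end
end

section
/- Let C1, C2 ⊆ F4^ℓ be nonzero linear codes with minimum distances d1, d2, and suppose d2 ≥ d_sr where d_sr is the minimum sum-rank distance of SR(C1,C2). If e1, e2 ∈ F4^ℓ satisfy wt_sr(e1*x + e2*x^2) ≤ ⌊(d_sr − 1)/2⌋, then wt_H(e2) ≤ ⌊(d2 − 1)/2⌋. -/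
open scoped Classical

noncomputable section

lemma exists_non01 : ∃ x : F4, x ≠ 0 ∧ x ≠ 1 := by
  by_contra h
  push_neg at h
  have hsub : (Finset.univ : Finset F4) ⊆ {0, 1} := by
    intro x _
    simp only [Finset.mem_insert, Finset.mem_singleton]
    by_cases hx : x = 0
    · exact Or.inl hx
    · exact Or.inr (h x hx)
  have hcard : Fintype.card F4 ≤ 2 := by
    calc Fintype.card F4 = (Finset.univ : Finset F4).card := rfl
      _ ≤ ({0, 1} : Finset F4).card := Finset.card_le_card hsub
      _ ≤ 2 := Finset.card_insert_le _ _ |>.trans (by simp)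
  have : Fintype.card F4 = 4 := by
    have := GaloisField.card 2 2 (by norm_num)
    simpa using this
  omega

lemma Lmap_ne_zero (a b : F4) (hb : b ≠ 0) : Lmap a b ≠ 0 := by
  intro hzero
  have h2 : (2 : F4) = 0 := by
    have : CharP F4 2 := inferInstance
    exact_mod_cast CharP.cast_eq_zero F4 2
  have h1 : a + b = 0 := by
    have := congrFun (congrArg DFunLike.coe hzero) 1
    simpa [Lmap] using this
  have hab : a = b := by linear_combination h1 - b * h2
  obtain ⟨x, hx0, hx1⟩ := exists_non01
  have hx : a * x + b * x ^ 2 = 0 := by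
    have := congrFun (congrArg DFunLike.coe hzero) x
    simpa [Lmap] using this
  rw [hab] at hx
  have hfac : b * (x * (1 + x)) = 0 := by linear_combination hx
  have h1x : (1 : F4) + x ≠ 0 := by
    intro h
    exact hx1 (by linear_combination h - h2)
  exact hb (by
    rcases mul_eq_zero.mp hfac with h | h
    · exact h
    · exact absurd h (mul_ne_zero hx0 h1x))

lemma one_le_rk (a b : F4) (hb : b ≠ 0) : 1 ≤ rk (Lmap a b) := by
  have hne := Lmap_ne_zero a b hb
  rw [rk, Nat.one_le_iff_ne_zero]
  intro h
  apply hne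
  have : Module.finrank (ZMod 2) (LinearMap.range (Lmap a b)) = 0 := h
  have hbot : LinearMap.range (Lmap a b) = ⊥ := by
    have : Subsingleton (LinearMap.range (Lmap a b)) := by
      have : Module.Finite (ZMod 2) (LinearMap.range (Lmap a b)) :=
        Module.Finite.of_finite
      exact Module.finrank_zero_iff.mp h
    exact Submodule.eq_bot_of_subsingleton
  exact LinearMap.range_eq_bot.mp hbot

theorem stmt13 {ℓ : ℕ} (C1 C2 : Submodule F4 (Fin ℓ → F4))
    (hC1 : C1 ≠ ⊥) (hC2 : C2 ≠ ⊥) (d1 d2 dsr : ℕ)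
    (hd1 : IsLeast {w | ∃ c ∈ C1, c ≠ 0 ∧ hammingNorm c = w} d1)
    (hd2 : IsLeast {w | ∃ c ∈ C2, c ≠ 0 ∧ hammingNorm c = w} d2)
    (hdsr : IsLeast {w | ∃ a1 ∈ C1, ∃ a2 ∈ C2, (a1, a2) ≠ (0, 0) ∧ srWt a1 a2 = w} dsr)
    (h2 : dsr ≤ d2)
    (e1 e2 : Fin ℓ → F4) (he : srWt e1 e2 ≤ (dsr - 1) / 2) :
    hammingNorm e2 ≤ (d2 - 1) / 2 := by
  have key : hammingNorm e2 ≤ srWt e1 e2 := by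
    rw [hammingNorm, srWt]
    calc (Finset.univ.filter fun i => e2 i ≠ 0).card
        = ∑ i ∈ Finset.univ.filter (fun i => e2 i ≠ 0), 1 := by
          simp
      _ ≤ ∑ i ∈ Finset.univ.filter (fun i => e2 i ≠ 0),
            rk (Lmap (e1 i) (e2 i)) := by
          apply Finset.sum_le_sum
          intro i hi
          exact one_le_rk _ _ (Finset.mem_filter.mp hi).2
      _ ≤ ∑ i, rk (Lmap (e1 i) (e2 i)) :=
          Finset.sum_le_sum_of_subset (Finset.filter_subset _ _)
  calc hammingNorm e2 ≤ (dsr - 1) / 2 := key.trans he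
    _ ≤ (d2 - 1) / 2 := Nat.div_le_div_right (Nat.sub_le_sub_right h2 1)
end
end
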